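/- Let r > 1, α > 0, and let f, g be probability densities on ℝ such that N_r(f ∗ g)^α = N_r(f)^α + N_r(g)^α, where N_r is the one-dimensional Rényi entropy power. For n ≥ 1, let f^{⊗n}(x) = ∏_{i=1}^n f(x_i) and g^{⊗n}(x) = ∏_{i=1}^n g(x_i) be the corresponding product densities on ℝⁿ. Then N_r(f^{⊗n} ∗ g^{⊗n})^α = N_r(f^{⊗n})^α + N_r(g^{⊗n})^α, where N_r is the n-dimensional Rényi entropy power. In particular, the exponent α in the Rényi entropy power inequality cannot be improved by increasing the dimension. -/

import Mathlib

open MeasureTheory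

/-- Tensorization: if `r > 1`, `α > 0`, and probability densities `f, g` on `ℝ`
satisfy `N_r(f ∗ g)^α = N_r(f)^α + N_r(g)^α` (one-dimensional Rényi entropy
powers, `N_r(h) = (∫ h^r)^(-2/(r-1))`), then the product densities
`f^{⊗n}, g^{⊗n}` on `ℝⁿ` satisfy
`N_r(f^{⊗n} ∗ g^{⊗n})^α = N_r(f^{⊗n})^α + N_r(g^{⊗n})^α` with the
`n`-dimensional Rényi entropy power `N_r(h) = (∫ h^r)^(-2/(n(r-1)))`.
Hence the exponent `α` cannot be improved by increasing the dimension. -/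
theorem renyi_epi_tensorization (r α : ℝ) (hr : 1 < r) (hα : 0 < α)
    (n : ℕ) (hn : 1 ≤ n)
    (f g : ℝ → ℝ) (hfm : Measurable f) (hgm : Measurable g)
    (hf0 : ∀ x, 0 ≤ f x) (hf1 : (∫ x, f x) = 1)
    (hg0 : ∀ x, 0 ≤ g x) (hg1 : (∫ x, g x) = 1)
    (hfr : Integrable (fun x => f x ^ r))
    (hgr : Integrable (fun x => g x ^ r))
    (H : ((∫ x, (∫ y, f (x - y) * g y) ^ r) ^ (-2 / (r - 1))) ^ α =
      ((∫ x, f x ^ r) ^ (-2 / (r - 1))) ^ α +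
        ((∫ x, g x ^ r) ^ (-2 / (r - 1))) ^ α) :
    ((∫ x : Fin n → ℝ,
          (∫ y : Fin n → ℝ, (∏ i, f ((x - y) i)) * ∏ i, g (y i)) ^ r) ^
        (-2 / ((n : ℝ) * (r - 1)))) ^ α =
      ((∫ x : Fin n → ℝ, (∏ i, f (x i)) ^ r) ^ (-2 / ((n : ℝ) * (r - 1)))) ^ α +
        ((∫ x : Fin n → ℝ, (∏ i, g (x i)) ^ r) ^ (-2 / ((n : ℝ) * (r - 1)))) ^ α := by
  set h : ℝ → ℝ := fun z => ∫ t, f (z - t) * g t with hh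
  have hh0 : ∀ z, 0 ≤ h z := fun z =>
    integral_nonneg fun t => mul_nonneg (hf0 _) (hg0 _)
  -- factorize the inner convolution integral
  have hconv : ∀ x : Fin n → ℝ,
      (∫ y : Fin n → ℝ, (∏ i, f ((x - y) i)) * ∏ i, g (y i)) = ∏ i, h (x i) := by
    intro x
    have : ∀ y : Fin n → ℝ,
        (∏ i, f ((x - y) i)) * ∏ i, g (y i) = ∏ i, (f (x i - y i) * g (y i)) := by
      intro y
      rw [← Finset.prod_mul_distrib]
      simp [Pi.sub_apply]
    simp_rw [this]
    exact integral_fintype_prod_eq_prod (ι := Fin n) (fun i t => f (x i - t) * g t)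
  -- a general factorization step for nonnegative φ
  have key : ∀ φ : ℝ → ℝ, (∀ z, 0 ≤ φ z) →
      (∫ x : Fin n → ℝ, (∏ i, φ (x i)) ^ r) = (∫ z, φ z ^ r) ^ n := by
    intro φ hφ
    have : ∀ x : Fin n → ℝ, (∏ i, φ (x i)) ^ r = ∏ i, φ (x i) ^ r := by
      intro x
      rw [Real.finset_prod_rpow _ _ (fun i _ => hφ _)]
    simp_rw [this]
    exact (integral_fintype_prod_eq_pow (ι := Fin n) (fun z => φ z ^ r)).trans (by simp)
  -- rpow algebra : ((A^n)^(-2/(n(r-1))))^α = (A^(-2/(r-1)))^α for A ≥ 0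
  have hne : (n : ℝ) ≠ 0 := Nat.cast_ne_zero.mpr (by omega)
  have hrne : r - 1 ≠ 0 := sub_ne_zero.mpr hr.ne'
  have pow_step : ∀ A : ℝ, 0 ≤ A →
      ((A ^ n) ^ (-2 / ((n : ℝ) * (r - 1)))) = A ^ (-2 / (r - 1)) := by
    intro A hA
    rw [← Real.rpow_natCast A n, ← Real.rpow_mul hA]
    congr 1
    field_simp
  have hIf : (0:ℝ) ≤ ∫ x, f x ^ r :=
    integral_nonneg fun x => Real.rpow_nonneg (hf0 x) r
  have hIg : (0:ℝ) ≤ ∫ x, g x ^ r :=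
    integral_nonneg fun x => Real.rpow_nonneg (hg0 x) r
  have hIh : (0:ℝ) ≤ ∫ x, h x ^ r :=
    integral_nonneg fun x => Real.rpow_nonneg (hh0 x) r
  simp_rw [hconv]
  rw [key h hh0, key f hf0, key g hg0, pow_step _ hIh, pow_step _ hIf, pow_step _ hIg]
  exact H
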